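/- Let k, ε > 0 and k_ε > 0, and suppose j₀(k_ε) ≠ 0 and the real number condition j₀'(k_ε)/j₀(k_ε) = -ε - kε² tan(kε) holds (with cos(kε) ≠ 0). Write h₀ = j₀ + i y₀ with j₀(t) = sin(t)/t, y₀(t) = -cos(t)/t. Then in the expression α₀ = -(kε j₀'(kε) j₀(k_ε) - (1/ε) k_ε j₀(kε) j₀'(k_ε)) / (kε h₀'(kε) j₀(k_ε) - (1/ε) k_ε h₀(kε) j₀'(k_ε)), the imaginary part of the denominator vanishes and the denominator equals the numerator, so that α₀ = -1 (assuming the denominator is nonzero). -/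

import Mathlib

open Real Complex

/-- Spherical Bessel function of the first kind of order 0: `j₀(t) = sin t / t`. -/
noncomputable def sphj0 (t : ℝ) : ℝ := Real.sin t / t

/-- Spherical Bessel function of the second kind of order 0: `y₀(t) = -cos t / t`. -/
noncomputable def sphy0 (t : ℝ) : ℝ := -Real.cos t / t

/-- Spherical Hankel function of the first kind of order 0: `h₀ = j₀ + i y₀`. -/
noncomputable def sphh0 (t : ℝ) : ℂ :=
  Complex.ofReal (sphj0 t) + Complex.I * Complex.ofReal (sphy0 t)

lemma hasDerivAt_sphj0 (t : ℝ) (ht : t ≠ 0) :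
    HasDerivAt sphj0 ((Real.cos t * t - Real.sin t) / t ^ 2) t := by
  have : HasDerivAt (fun x => Real.sin x / id x) _ t := (Real.hasDerivAt_sin t).div (hasDerivAt_id t) ht
  convert this using 2 <;> simp [sphj0]

lemma hasDerivAt_sphy0 (t : ℝ) (ht : t ≠ 0) :
    HasDerivAt sphy0 ((Real.sin t * t + Real.cos t) / t ^ 2) t := by
  have : HasDerivAt (fun x => -Real.cos x / id x) _ t := ((Real.hasDerivAt_cos t).neg).div (hasDerivAt_id t) ht
  convert this using 2 <;> simp [sphy0]

lemma deriv_sphh0_eq (t : ℝ) (ht : t ≠ 0) :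
    deriv sphh0 t = Complex.ofReal (deriv sphj0 t) + Complex.I * Complex.ofReal (deriv sphy0 t) := by
  have hj := hasDerivAt_sphj0 t ht
  have hy := hasDerivAt_sphy0 t ht
  have hh : HasDerivAt sphh0
      (Complex.ofReal ((Real.cos t * t - Real.sin t) / t ^ 2)
        + Complex.I * Complex.ofReal ((Real.sin t * t + Real.cos t) / t ^ 2)) t :=
    (hj.ofReal_comp).add ((hy.ofReal_comp).const_mul Complex.I)
  rw [hh.deriv, hj.deriv, hy.deriv]

/-- choosing the interior wavenumber `k_ε` so that
`k_ε j₀'(k_ε)/j₀(k_ε) = -ε - k ε² tan(kε)` kills the imaginary part of the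
denominator of the reflection coefficient; the denominator then equals the
numerator, so `α₀ = -1`. -/
theorem stmt10 (k ε kε' : ℝ) (hk : 0 < k) (hε : 0 < ε) (hkε' : 0 < kε')
    (hj : sphj0 kε' ≠ 0) (hcos : Real.cos (k * ε) ≠ 0)
    (hmatch : kε' * deriv sphj0 kε' / sphj0 kε' = -ε - k * ε ^ 2 * Real.tan (k * ε)) :
    ((k * ε) * deriv sphh0 (k * ε) * Complex.ofReal (sphj0 kε')
        - (1 / ε : ℂ) * kε' * sphh0 (k * ε) * Complex.ofReal (deriv sphj0 kε')).im = 0 ∧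
    (k * ε) * deriv sphh0 (k * ε) * Complex.ofReal (sphj0 kε')
        - (1 / ε : ℂ) * kε' * sphh0 (k * ε) * Complex.ofReal (deriv sphj0 kε')
      = Complex.ofReal ((k * ε) * deriv sphj0 (k * ε) * sphj0 kε'
          - (1 / ε) * kε' * sphj0 (k * ε) * deriv sphj0 kε') ∧
    ((k * ε) * deriv sphh0 (k * ε) * Complex.ofReal (sphj0 kε')
        - (1 / ε : ℂ) * kε' * sphh0 (k * ε) * Complex.ofReal (deriv sphj0 kε') ≠ 0 →
      -Complex.ofReal ((k * ε) * deriv sphj0 (k * ε) * sphj0 kε'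
          - (1 / ε) * kε' * sphj0 (k * ε) * deriv sphj0 kε')
        / ((k * ε) * deriv sphh0 (k * ε) * Complex.ofReal (sphj0 kε')
            - (1 / ε : ℂ) * kε' * sphh0 (k * ε) * Complex.ofReal (deriv sphj0 kε'))
        = -1) := by
  have ht0 : (0:ℝ) < k * ε := mul_pos hk hε
  have ht : k * ε ≠ 0 := ne_of_gt ht0
  have hεne : ε ≠ 0 := ne_of_gt hε
  have hdj : deriv sphj0 (k * ε)
      = (Real.cos (k*ε) * (k*ε) - Real.sin (k*ε)) / (k*ε) ^ 2 :=
    (hasDerivAt_sphj0 _ ht).deriv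
  have hdy : deriv sphy0 (k * ε)
      = (Real.sin (k*ε) * (k*ε) + Real.cos (k*ε)) / (k*ε) ^ 2 :=
    (hasDerivAt_sphy0 _ ht).deriv
  have hdh := deriv_sphh0_eq (k * ε) ht
  -- from hmatch
  have hmatch' : kε' * deriv sphj0 kε'
      = (-ε - k * ε ^ 2 * Real.tan (k * ε)) * sphj0 kε' := by
    field_simp at hmatch
    rw [mul_comm ε k] at hmatch
    linarith [hmatch]
  -- key: imaginary part vanishes
  have key : (k * ε) * deriv sphy0 (k*ε) * sphj0 kε'
      - (1/ε) * kε' * sphy0 (k*ε) * deriv sphj0 kε' = 0 := by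
    have h1 : (1/ε) * (kε' * deriv sphj0 kε')
        = (-1 - k * ε * Real.tan (k*ε)) * sphj0 kε' := by
      rw [hmatch']; field_simp
    have htan : Real.tan (k*ε) = Real.sin (k*ε) / Real.cos (k*ε) := Real.tan_eq_sin_div_cos _
    have : (1/ε) * kε' * sphy0 (k*ε) * deriv sphj0 kε'
        = sphy0 (k*ε) * ((1/ε) * (kε' * deriv sphj0 kε')) := by ring
    rw [this, h1, hdy, sphy0, htan]
    field_simp
    ring
  -- denominator equals ofReal of numerator
  set A : ℝ := (k * ε) * deriv sphj0 (k * ε) * sphj0 kε'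
      - (1 / ε) * kε' * sphj0 (k * ε) * deriv sphj0 kε' with hA
  have hD : (k * ε) * deriv sphh0 (k * ε) * Complex.ofReal (sphj0 kε')
        - (1 / ε : ℂ) * kε' * sphh0 (k * ε) * Complex.ofReal (deriv sphj0 kε')
      = Complex.ofReal A := by
    rw [hdh, sphh0, hA]
    have hB : ((k * ε) * deriv sphy0 (k*ε) * sphj0 kε'
        - (1/ε) * kε' * sphy0 (k*ε) * deriv sphj0 kε' : ℂ) = 0 := by
      exact_mod_cast congrArg Complex.ofReal key
    push_cast
    push_cast at hB
    linear_combination Complex.I * hB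
  refine ⟨by rw [hD]; simp, hD, ?_⟩
  intro hne
  rw [hD] at hne ⊢
  rw [neg_div, div_self hne]
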